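/- Let 0 < Y < 2 and define J_Y(λ) = √(λ/(2π)) ∫_0^∞ e^{−λh/2} h^{(Y−1)/2} (1+h)^{−Y/2} dh for λ > 0. Then J_Y(λ) → 1 as λ → 0⁺. -/

import Mathlib

open MeasureTheory Real Set Filter

/-- `J_Y(λ) = √(λ/(2π)) ∫_0^∞ e^{-λh/2} h^{(Y-1)/2} (1+h)^{-Y/2} dh`. -/
noncomputable def JFun (Y l : ℝ) : ℝ :=
  Real.sqrt (l / (2 * π)) *
    ∫ h in Ioi (0:ℝ), Real.exp (-(l * h / 2)) * h ^ ((Y-1)/2) * (1+h) ^ (-(Y/2))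

noncomputable def IFun (Y l : ℝ) : ℝ :=
  ∫ t in Ioi (0:ℝ), Real.exp (-(t / 2)) * t ^ ((Y-1)/2) * (l+t) ^ (-(Y/2))

lemma JFun_eq (Y : ℝ) {l : ℝ} (hl : 0 < l) :
    JFun Y l = IFun Y l / Real.sqrt (2 * π) := by
  have hl' : 0 < l⁻¹ := inv_pos.mpr hl
  have key := integral_comp_mul_left_Ioi
    (fun h => Real.exp (-(l * h / 2)) * h ^ ((Y-1)/2) * (1+h) ^ (-(Y/2))) 0 hl'
  simp only [mul_zero, inv_inv] at key
  have step : (∫ x in Ioi (0:ℝ),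
      Real.exp (-(l * (l⁻¹ * x) / 2)) * (l⁻¹ * x) ^ ((Y-1)/2) * (1 + l⁻¹ * x) ^ (-(Y/2)))
      = l ^ ((1:ℝ)/2) * IFun Y l := by
    rw [IFun, ← integral_const_mul]
    refine setIntegral_congr_fun measurableSet_Ioi (fun x hx => ?_)
    have hx : (0:ℝ) < x := hx
    have h1 : l * (l⁻¹ * x) / 2 = x / 2 := by field_simp
    have h2 : (l⁻¹ * x) ^ ((Y-1)/2) = l ^ (-((Y-1)/2)) * x ^ ((Y-1)/2) := by
      rw [Real.mul_rpow hl'.le hx.le, Real.inv_rpow hl.le, ← Real.rpow_neg hl.le]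
    have h3 : (1 + l⁻¹ * x) ^ (-(Y/2)) = l ^ (Y/2) * (l + x) ^ (-(Y/2)) := by
      have : 1 + l⁻¹ * x = l⁻¹ * (l + x) := by field_simp
      rw [this, Real.mul_rpow hl'.le (by linarith), Real.inv_rpow hl.le,
        ← Real.rpow_neg hl.le, neg_neg]
    rw [h1, h2, h3]
    rw [show Real.exp (-(x/2)) * (l ^ (-((Y-1)/2)) * x ^ ((Y-1)/2)) *
        (l ^ (Y/2) * (l + x) ^ (-(Y/2)))
      = (l ^ (-((Y-1)/2)) * l ^ (Y/2)) *
        (Real.exp (-(x/2)) * x ^ ((Y-1)/2) * (l + x) ^ (-(Y/2))) by ring]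
    rw [← Real.rpow_add hl]
    ring_nf
  have hInt : (∫ h in Ioi (0:ℝ),
      Real.exp (-(l * h / 2)) * h ^ ((Y-1)/2) * (1+h) ^ (-(Y/2)))
      = l⁻¹ * (l ^ ((1:ℝ)/2) * IFun Y l) := by
    rw [← step, key, smul_eq_mul, inv_mul_cancel_left₀ hl.ne']
  rw [JFun, hInt]
  have hsl : Real.sqrt (l / (2*π)) = Real.sqrt l / Real.sqrt (2*π) :=
    Real.sqrt_div hl.le _
  rw [hsl]
  have hll : l⁻¹ * l ^ ((1:ℝ)/2) = (Real.sqrt l)⁻¹ := by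
    rw [Real.sqrt_eq_rpow, ← Real.rpow_neg_one l, ← Real.rpow_add hl]
    rw [show (-1 + 1/2 : ℝ) = -(1/2) by norm_num, Real.rpow_neg hl.le]
  have hsqrt : Real.sqrt l ≠ 0 := by positivity
  rw [show Real.sqrt l / Real.sqrt (2*π) * (l⁻¹ * (l ^ ((1:ℝ)/2) * IFun Y l))
      = (Real.sqrt l * (l⁻¹ * l ^ ((1:ℝ)/2))) * IFun Y l / Real.sqrt (2*π) by ring, hll,
    mul_inv_cancel₀ hsqrt, one_mul]

lemma bound_integrable : IntegrableOn
    (fun t : ℝ => Real.exp (-(t/2)) * t ^ (-(1:ℝ)/2)) (Ioi 0) := by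
  have := integrableOn_rpow_mul_exp_neg_mul_rpow (s := -(1:ℝ)/2) (p := 1) (b := 1/2)
    (by norm_num) zero_lt_one (by norm_num)
  refine this.congr_fun (fun x hx => ?_) measurableSet_Ioi
  simp only [Real.rpow_one]
  ring_nf

lemma IFun_tendsto (Y : ℝ) (hY0 : 0 < Y) (hY2 : Y < 2) :
    Tendsto (fun l => IFun Y l) (nhdsWithin 0 (Ioi 0)) (nhds (Real.sqrt (2 * π))) := by
  have hmeas : ∀ l : ℝ, AEStronglyMeasurable
      (fun t : ℝ => Real.exp (-(t/2)) * t ^ ((Y-1)/2) * (l+t) ^ (-(Y/2)))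
      (volume.restrict (Ioi 0)) := by
    intro l
    apply Measurable.aestronglyMeasurable
    fun_prop
  have key : Tendsto (fun l => IFun Y l) (nhdsWithin 0 (Ioi 0))
      (nhds (∫ t in Ioi (0:ℝ), Real.exp (-(t/2)) * t ^ (-(1:ℝ)/2))) := by
    refine tendsto_integral_filter_of_dominated_convergence
      (fun t => Real.exp (-(t/2)) * t ^ (-(1:ℝ)/2))
      (Eventually.of_forall hmeas) ?_ bound_integrable ?_
    · filter_upwards [self_mem_nhdsWithin] with l hl
      have hl : (0:ℝ) < l := hl
      rw [ae_restrict_iff' measurableSet_Ioi]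
      filter_upwards with t ht
      have ht : (0:ℝ) < t := ht
      have h1 : (l+t) ^ (-(Y/2)) ≤ t ^ (-(Y/2)) :=
        Real.rpow_le_rpow_of_nonpos ht (by linarith) (by linarith)
      have h2 : t ^ ((Y-1)/2) * t ^ (-(Y/2)) = t ^ (-(1:ℝ)/2) := by
        rw [← Real.rpow_add ht]; ring_nf
      rw [Real.norm_eq_abs, abs_of_nonneg (by positivity)]
      calc Real.exp (-(t/2)) * t ^ ((Y-1)/2) * (l+t) ^ (-(Y/2))
          ≤ Real.exp (-(t/2)) * t ^ ((Y-1)/2) * t ^ (-(Y/2)) := by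
            apply mul_le_mul_of_nonneg_left h1 (by positivity)
        _ = Real.exp (-(t/2)) * t ^ (-(1:ℝ)/2) := by rw [mul_assoc, h2]
    · rw [ae_restrict_iff' measurableSet_Ioi]
      filter_upwards with t ht
      have ht : (0:ℝ) < t := ht
      have h2 : t ^ ((Y-1)/2) * t ^ (-(Y/2)) = t ^ (-(1:ℝ)/2) := by
        rw [← Real.rpow_add ht]; ring_nf
      have hrpow : Tendsto (fun l : ℝ => (l+t) ^ (-(Y/2))) (nhdsWithin 0 (Ioi 0))
          (nhds (t ^ (-(Y/2)))) := by
        have hadd : Tendsto (fun l : ℝ => l + t) (nhdsWithin 0 (Ioi 0)) (nhds (0 + t)) :=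
          (tendsto_id.add tendsto_const_nhds).mono_left nhdsWithin_le_nhds
        rw [zero_add] at hadd
        exact hadd.rpow_const (Or.inl ht.ne')
      have := (tendsto_const_nhds (x := Real.exp (-(t/2)) * t ^ ((Y-1)/2))
        (f := nhdsWithin (0:ℝ) (Ioi 0))).mul hrpow
      rw [mul_assoc, h2] at this
      simpa [mul_assoc] using this
  have hval : (∫ t in Ioi (0:ℝ), Real.exp (-(t/2)) * t ^ (-(1:ℝ)/2)) = Real.sqrt (2*π) := by
    have := integral_rpow_mul_exp_neg_mul_Ioi (a := (1:ℝ)/2) (r := (1:ℝ)/2)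
      (by norm_num) (by norm_num)
    rw [show ((1:ℝ)/2 - 1) = -(1:ℝ)/2 by norm_num] at this
    rw [show (∫ t in Ioi (0:ℝ), Real.exp (-(t/2)) * t ^ (-(1:ℝ)/2))
        = ∫ t in Ioi (0:ℝ), t ^ (-(1:ℝ)/2) * Real.exp (-(1/2 * t)) by
        refine setIntegral_congr_fun measurableSet_Ioi (fun x hx => ?_)
        rw [show (1:ℝ)/2 * x = x/2 by ring]; ring, this,
      Real.Gamma_one_half_eq, show ((1:ℝ)/(1/2)) = 2 by norm_num,
      show ((2:ℝ) ^ ((1:ℝ)/2)) = Real.sqrt 2 from (Real.sqrt_eq_rpow 2).symm,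
      ← Real.sqrt_mul (by norm_num)]
  rwa [hval] at key

/-- `J_Y(λ) → 1` as `λ → 0⁺`. -/
theorem JFun_tendsto_one (Y : ℝ) (hY0 : 0 < Y) (hY2 : Y < 2) :
    Tendsto (fun l => JFun Y l) (nhdsWithin 0 (Ioi 0)) (nhds 1) := by
  have h2π : (0:ℝ) < Real.sqrt (2*π) := Real.sqrt_pos.mpr (by positivity)
  have := (IFun_tendsto Y hY0 hY2).div_const (Real.sqrt (2*π))
  rw [div_self h2π.ne'] at this
  refine this.congr' ?_
  filter_upwards [self_mem_nhdsWithin] with l hl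
  exact (JFun_eq Y hl).symm
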